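/- Let n = 4k+1 with k ≥ 2, and let X, Y be disjoint sets with |X| = 2k+1, |Y| = 2k. Pick a_1, a_2, a_3 ∈ X distinct and b_1, b_2, b_3 ∈ Y distinct. Let G_3 be the graph on X ∪ Y whose edges are all pairs inside X, all pairs inside Y, and the three edges a_1b_1, a_2b_2, a_3b_3. Then every Hamilton cycle of G_3 contains an even number of edges of G_3[X] (the complete graph on X), and consequently C_n(G_3) ≠ C(G_3), i.e., G_3 is not Hamilton-generated. -/

import Mathlib

open SimpleGraph

variable {V : Type} [Fintype V] [DecidableEq V]

/-- Indicator vector over F₂ of a list of edges. -/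
def edgeIndicator (l : List (Sym2 V)) : Sym2 V → ZMod 2 :=
  fun e => if e ∈ l then 1 else 0

/-- The cycle space of a graph: the F₂-span of edge sets of cycles. -/
def cycleSpace (G : SimpleGraph V) : Submodule (ZMod 2) (Sym2 V → ZMod 2) :=
  Submodule.span (ZMod 2)
    {f | ∃ (u : V) (c : G.Walk u u), c.IsCycle ∧ f = edgeIndicator c.edges}

/-- The subspace of the cycle space generated by cycles of length exactly `k`. -/
def cycleSpaceLen (G : SimpleGraph V) (k : ℕ) : Submodule (ZMod 2) (Sym2 V → ZMod 2) :=
  Submodule.span (ZMod 2)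
    {f | ∃ (u : V) (c : G.Walk u u), c.IsCycle ∧ c.length = k ∧ f = edgeIndicator c.edges}

section Helpers

set_option linter.unusedSectionVars false

/-- Bool-valued (classical) membership indicator for a set. -/
noncomputable def bmem (X : Set V) (v : V) : Bool :=
  @decide (v ∈ X) (Classical.propDecidable _)

lemma bmem_iff (X : Set V) (v : V) : bmem X v = true ↔ v ∈ X := by
  simp [bmem]

/-- Bool predicate: the edge lies inside `X`. -/
noncomputable def eIn (X : Set V) : Sym2 V → Bool :=
  Sym2.lift ⟨fun x y => bmem X x && bmem X y, fun _ _ => Bool.and_comm ..⟩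

/-- Bool predicate: the edge crosses between `X` and its complement. -/
noncomputable def eCr (X : Set V) : Sym2 V → Bool :=
  Sym2.lift ⟨fun x y => xor (bmem X x) (bmem X y), fun _ _ => Bool.xor_comm ..⟩

@[simp] lemma eIn_mk (X : Set V) (x y : V) : eIn X s(x, y) = (bmem X x && bmem X y) := rfl
@[simp] lemma eCr_mk (X : Set V) (x y : V) : eCr X s(x, y) = xor (bmem X x) (bmem X y) := rfl

lemma eIn_iff (X : Set V) (e : Sym2 V) : eIn X e = true ↔ ∀ v ∈ e, v ∈ X := by
  induction e using Sym2.ind with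
  | _ x y =>
    simp only [eIn_mk, Bool.and_eq_true, bmem_iff, Sym2.mem_iff]
    constructor
    · rintro ⟨h1, h2⟩ v (rfl | rfl) <;> assumption
    · intro h; exact ⟨h x (Or.inl rfl), h y (Or.inr rfl)⟩

/-- Key counting identity along a walk:
`2·(#edges inside X) + (#crossing edges) + [u ∈ X] + [v ∈ X] = 2·(#support vertices in X)`. -/
lemma key_count {G : SimpleGraph V} (X : Set V) {u v : V} (w : G.Walk u v) :
    2 * w.edges.countP (eIn X) + w.edges.countP (eCr X)
      + (bmem X u).toNat + (bmem X v).toNat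
      = 2 * w.support.countP (bmem X) := by
  induction w with
  | nil =>
    rename_i z
    simp only [Walk.edges_nil, Walk.support_nil, List.countP_nil, List.countP_cons,
      List.countP_nil]
    rcases Bool.eq_false_or_eq_true (bmem X z) with h | h <;> simp [h]
  | @cons a b c hadj p ih =>
    simp only [Walk.edges_cons, Walk.support_cons, List.countP_cons, eIn_mk, eCr_mk]
    rcases Bool.eq_false_or_eq_true (bmem X a) with hA | hA <;>
      rcases Bool.eq_false_or_eq_true (bmem X b) with hB | hB <;>
      simp only [hA, hB, Bool.false_and, Bool.true_and, Bool.and_false, Bool.and_true,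
        Bool.false_xor, Bool.true_xor, Bool.xor_false, Bool.xor_true, Bool.not_true,
        Bool.not_false, Bool.toNat_false, Bool.toNat_true, Bool.false_eq_true,
        Bool.true_eq_false, reduceIte] at ih ⊢ <;> omega

/-- If no edge of a walk crosses the boundary of `X`, all its vertices lie on the
same side as the starting vertex. -/
lemma no_cross {G : SimpleGraph V} (X : Set V) {u v : V} (w : G.Walk u v)
    (hno : ∀ e ∈ w.edges, eCr X e = false) :
    ∀ x ∈ w.support, bmem X x = bmem X u := by
  induction w with
  | nil => simp
  | @cons a b c hadj p ih =>
    intro x hx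
    have h1 : eCr X s(a, b) = false := hno _ (by simp)
    have h2 : bmem X b = bmem X a := by
      simp only [eCr_mk] at h1
      rcases Bool.eq_false_or_eq_true (bmem X a) with hA | hA <;>
        rcases Bool.eq_false_or_eq_true (bmem X b) with hB | hB <;>
        simp [hA, hB] at h1 ⊢
    rcases List.mem_cons.1 (by simpa [Walk.support_cons] using hx) with rfl | hx'
    · rfl
    · rw [ih (fun e he => hno e (by simp [he])) x hx', h2]

lemma pair_eq_cases {x y a b : V} (hxy : x ≠ y) (h : ({x, y} : Set V) = {a, b}) :
    (x = a ∧ y = b) ∨ (x = b ∧ y = a) := by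
  have hx : x ∈ ({a, b} : Set V) := h ▸ (by simp : x ∈ ({x, y} : Set V))
  have hy : y ∈ ({a, b} : Set V) := h ▸ (by simp : y ∈ ({x, y} : Set V))
  simp at hx hy
  rcases hx with rfl | rfl <;> rcases hy with rfl | rfl <;> tauto

/-- A cycle whose length is the number of vertices is a Hamiltonian cycle. -/
lemma isHamCycle_of_length {G : SimpleGraph V} {u : V} {c : G.Walk u u}
    (hc : c.IsCycle) (hl : c.length = Fintype.card V) : c.IsHamiltonianCycle := by
  rw [Walk.isHamiltonianCycle_iff_isCycle_and_support_count_tail_eq_one]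
  refine ⟨hc, fun a => ?_⟩
  have hnd := hc.support_nodup
  have hlen : c.support.tail.length = Fintype.card V := by
    have h1 := Walk.length_support c
    have h2 : c.support.tail.length = c.support.length - 1 := List.length_tail
    omega
  have hmem : a ∈ c.support.tail := by
    have h1 : c.support.tail.toFinset.card = Fintype.card V := by
      rw [List.toFinset_card_of_nodup hnd, hlen]
    have h2 : c.support.tail.toFinset = Finset.univ := Finset.eq_univ_of_card _ h1
    rw [← List.mem_toFinset, h2]; exact Finset.mem_univ a
  exact List.count_eq_one_of_mem hnd hmem

/-- For a Hamiltonian cycle, the tail of the support meets `X` exactly `X.ncard` times. -/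
lemma countP_tail_eq (X : Set V) {G : SimpleGraph V} {u : V} {c : G.Walk u u}
    (hc : c.IsHamiltonianCycle) : c.support.tail.countP (bmem X) = X.ncard := by
  classical
  have hcnt : ∀ a : V, c.support.tail.count a = 1 :=
    (Walk.isHamiltonianCycle_iff_isCycle_and_support_count_tail_eq_one.1 hc).2
  have hnd : c.support.tail.Nodup := hc.isCycle.support_nodup
  have hmem : ∀ x : V, x ∈ c.support.tail := fun x =>
    List.count_pos_iff.1 (by rw [hcnt x]; norm_num)
  rw [List.countP_eq_length_filter, ← List.toFinset_card_of_nodup (hnd.filter _)]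
  rw [Set.ncard_eq_toFinset_card' X]
  congr 1
  ext x
  simp [List.mem_filter, bmem_iff, hmem, Set.mem_toFinset]

/-- Main counting lemma: any Hamiltonian cycle of `G3` has exactly `2k` edges inside `X`. -/
lemma hmain_count (k : ℕ)
    (X Y : Set V) (hdis : Disjoint X Y)
    (hX : X.ncard = 2 * k + 1)
    (a1 a2 a3 b1 b2 b3 : V)
    (ha1 : a1 ∈ X)
    (hb1 : b1 ∈ Y)
    (G3 : SimpleGraph V)
    (hG3 : ∀ x y, G3.Adj x y ↔
      ((x ≠ y ∧ ((x ∈ X ∧ y ∈ X) ∨ (x ∈ Y ∧ y ∈ Y))) ∨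
        ({x, y} : Set V) = {a1, b1} ∨ ({x, y} : Set V) = {a2, b2} ∨
        ({x, y} : Set V) = {a3, b3}))
    (u : V) (c : G3.Walk u u) (hc : c.IsHamiltonianCycle) :
    c.edges.countP (eIn X) = 2 * k := by
  classical
  have hb1X : b1 ∉ X := fun h => Set.disjoint_left.1 hdis h hb1
  have hkey := key_count X c
  have hsupp : c.support.countP (bmem X) = (bmem X u).toNat + (2 * k + 1) := by
    rw [Walk.support_eq_cons, List.countP_cons, countP_tail_eq X hc, hX]
    cases h : bmem X u <;> simp [h] <;> omega
  have hsub : ∀ e ∈ c.edges, eCr X e = true →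
      e = s(a1, b1) ∨ e = s(a2, b2) ∨ e = s(a3, b3) := by
    have key : ∀ (x y : V), s(x, y) ∈ c.edges → eCr X s(x, y) = true →
        s(x, y) = s(a1, b1) ∨ s(x, y) = s(a2, b2) ∨ s(x, y) = s(a3, b3) := by
      intro x y he hcr
      have hadj : G3.Adj x y := Walk.adj_of_mem_edges c he
      have hne : x ≠ y := hadj.ne
      rcases (hG3 x y).1 hadj with ⟨-, ⟨hxX, hyX⟩ | ⟨hxY, hyY⟩⟩ | hp | hp | hp
      · rw [eCr_mk, (bmem_iff X x).2 hxX, (bmem_iff X y).2 hyX] at hcr; simp at hcr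
      · have hx : bmem X x = false := by
          rw [← Bool.not_eq_true, bmem_iff]; exact fun h => Set.disjoint_left.1 hdis h hxY
        have hy : bmem X y = false := by
          rw [← Bool.not_eq_true, bmem_iff]; exact fun h => Set.disjoint_left.1 hdis h hyY
        rw [eCr_mk, hx, hy] at hcr; simp at hcr
      · rcases pair_eq_cases hne hp with ⟨rfl, rfl⟩ | ⟨rfl, rfl⟩
        · exact Or.inl rfl
        · exact Or.inl Sym2.eq_swap
      · rcases pair_eq_cases hne hp with ⟨rfl, rfl⟩ | ⟨rfl, rfl⟩
        · exact Or.inr (Or.inl rfl)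
        · exact Or.inr (Or.inl Sym2.eq_swap)
      · rcases pair_eq_cases hne hp with ⟨rfl, rfl⟩ | ⟨rfl, rfl⟩
        · exact Or.inr (Or.inr rfl)
        · exact Or.inr (Or.inr Sym2.eq_swap)
    intro e
    induction e using Sym2.ind with
    | _ x y => exact key x y
  have hCr3 : c.edges.countP (eCr X) ≤ 3 := by
    rw [List.countP_eq_length_filter]
    have hnd : (c.edges.filter (eCr X)).Nodup := hc.isCycle.edges_nodup.filter _
    rw [← List.toFinset_card_of_nodup hnd]
    have hsubF : (c.edges.filter (eCr X)).toFinset ⊆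
        ({s(a1, b1), s(a2, b2), s(a3, b3)} : Finset (Sym2 V)) := by
      intro e he
      rw [List.mem_toFinset, List.mem_filter] at he
      rcases hsub e he.1 he.2 with h | h | h <;> simp [h]
    calc (c.edges.filter (eCr X)).toFinset.card
        ≤ ({s(a1, b1), s(a2, b2), s(a3, b3)} : Finset (Sym2 V)).card :=
          Finset.card_le_card hsubF
      _ ≤ 3 := by
          apply le_trans (Finset.card_insert_le _ _)
          have := Finset.card_insert_le s(a2, b2) ({s(a3, b3)} : Finset (Sym2 V))
          simp at this ⊢
          omega
  have hCr1 : 1 ≤ c.edges.countP (eCr X) := by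
    by_contra h
    push_neg at h
    have h0 : c.edges.countP (eCr X) = 0 := by omega
    have hno : ∀ e ∈ c.edges, eCr X e = false := by
      intro e he
      have := List.countP_eq_zero.1 h0 e he
      simpa using this
    have h1 := no_cross X c hno a1 (hc.mem_support a1)
    have h2 := no_cross X c hno b1 (hc.mem_support b1)
    rw [(bmem_iff X a1).2 ha1] at h1
    have hb1f : bmem X b1 = false := by rw [← Bool.not_eq_true, bmem_iff]; exact hb1X
    rw [hb1f] at h2
    rw [← h2] at h1
    exact Bool.false_ne_true h1.symm
  rw [hsupp] at hkey
  omega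

/-- The linear functional summing coordinates over edges inside `X`. -/
noncomputable def phiX (X : Set V) : (Sym2 V → ZMod 2) →ₗ[ZMod 2] ZMod 2 where
  toFun f := ∑ e ∈ Finset.univ.filter (fun e => eIn X e = true), f e
  map_add' f g := by simp [Finset.sum_add_distrib]
  map_smul' r f := by simp [Finset.mul_sum]

lemma phiX_indicator (X : Set V) (l : List (Sym2 V)) (hnd : l.Nodup) :
    phiX X (edgeIndicator l) = ((l.countP (eIn X) : ℕ) : ZMod 2) := by
  classical
  have h1 : phiX X (edgeIndicator l) =
      ∑ e ∈ Finset.univ.filter (fun e => eIn X e = true),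
        (if e ∈ l then (1 : ZMod 2) else 0) := rfl
  rw [h1, Finset.sum_boole]
  congr 1
  have h2 : (Finset.univ.filter (fun e => eIn X e = true)).filter (fun e => e ∈ l)
      = (l.filter (eIn X)).toFinset := by
    ext e
    simp only [Finset.mem_filter, Finset.mem_univ, true_and, List.mem_toFinset,
      List.mem_filter]
    tauto
  rw [h2, List.toFinset_card_of_nodup (hnd.filter _), ← List.countP_eq_length_filter]

end Helpers

/-- Construction A, graph `G₃`: complete graphs on `X` and `Y` joined by the three
edges `a₁b₁`, `a₂b₂`, `a₃b₃`.  Every Hamilton cycle contains an even number of edges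
inside `X`, and `G₃` is not Hamilton-generated. -/
theorem stmt3 (k : ℕ) (hk : 2 ≤ k)
    (X Y : Set V) (hdis : Disjoint X Y) (hun : X ∪ Y = Set.univ)
    (hX : X.ncard = 2 * k + 1) (hY : Y.ncard = 2 * k)
    (a1 a2 a3 b1 b2 b3 : V)
    (ha1 : a1 ∈ X) (ha2 : a2 ∈ X) (ha3 : a3 ∈ X)
    (hb1 : b1 ∈ Y) (hb2 : b2 ∈ Y) (hb3 : b3 ∈ Y)
    (ha12 : a1 ≠ a2) (ha13 : a1 ≠ a3) (ha23 : a2 ≠ a3)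
    (hb12 : b1 ≠ b2) (hb13 : b1 ≠ b3) (hb23 : b2 ≠ b3)
    (G3 : SimpleGraph V)
    (hG3 : ∀ x y, G3.Adj x y ↔
      ((x ≠ y ∧ ((x ∈ X ∧ y ∈ X) ∨ (x ∈ Y ∧ y ∈ Y))) ∨
        ({x, y} : Set V) = {a1, b1} ∨ ({x, y} : Set V) = {a2, b2} ∨
        ({x, y} : Set V) = {a3, b3})) :
    (∀ (u : V) (c : G3.Walk u u), c.IsHamiltonianCycle →
      Even ({e : Sym2 V | e ∈ c.edges ∧ ∀ v ∈ e, v ∈ X}.ncard)) ∧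
      cycleSpaceLen G3 (Fintype.card V) ≠ cycleSpace G3 := by
  classical
  have hmain : ∀ (u : V) (c : G3.Walk u u), c.IsHamiltonianCycle →
      c.edges.countP (eIn X) = 2 * k := fun u c hc =>
    hmain_count k X Y hdis hX a1 a2 a3 b1 b2 b3 ha1 hb1 G3 hG3 u c hc
  constructor
  · intro u c hc
    have hIn := hmain u c hc
    have hset : {e : Sym2 V | e ∈ c.edges ∧ ∀ v ∈ e, v ∈ X}
        = ↑((c.edges.filter (eIn X)).toFinset) := by
      ext e
      simp [List.mem_filter, eIn_iff]
    rw [hset, Set.ncard_coe_finset,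
      List.toFinset_card_of_nodup (hc.isCycle.edges_nodup.filter _),
      ← List.countP_eq_length_filter, hIn]
    exact even_two_mul k
  · -- the kernel of `phiX X` contains all Hamilton cycles
    have hker : cycleSpaceLen G3 (Fintype.card V) ≤ LinearMap.ker (phiX X) := by
      rw [cycleSpaceLen, Submodule.span_le]
      rintro f ⟨u, c, hcyc, hlen, rfl⟩
      have hc : c.IsHamiltonianCycle := isHamCycle_of_length hcyc hlen
      rw [SetLike.mem_coe, LinearMap.mem_ker,
        phiX_indicator X _ hc.isCycle.edges_nodup, hmain u c hc]
      have h2 : ((2 : ℕ) : ZMod 2) = 0 := by decide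
      rw [Nat.cast_mul, h2, zero_mul]
    -- a triangle inside X
    have hA12 : G3.Adj a1 a2 := (hG3 _ _).2 (Or.inl ⟨ha12, Or.inl ⟨ha1, ha2⟩⟩)
    have hA23 : G3.Adj a2 a3 := (hG3 _ _).2 (Or.inl ⟨ha23, Or.inl ⟨ha2, ha3⟩⟩)
    have hA31 : G3.Adj a3 a1 := (hG3 _ _).2 (Or.inl ⟨ha13.symm, Or.inl ⟨ha3, ha1⟩⟩)
    let t : G3.Walk a1 a1 := .cons hA12 (.cons hA23 (.cons hA31 .nil))
    have htedges : t.edges = [s(a1, a2), s(a2, a3), s(a3, a1)] := rfl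
    have h21 := ha12.symm
    have h31 := ha13.symm
    have h32 := ha23.symm
    have htc : t.IsCycle := by
      refine ⟨⟨⟨?_⟩, ?_⟩, ?_⟩
      · rw [htedges]
        simp [List.nodup_cons, Sym2.eq_iff]
        tauto
      · simp [t]
      · show (t.support).tail.Nodup
        have : t.support = [a1, a2, a3, a1] := rfl
        rw [this]
        simp [List.nodup_cons]
        tauto
    have hb1t : bmem X a1 = true := (bmem_iff X a1).2 ha1
    have hb2t : bmem X a2 = true := (bmem_iff X a2).2 ha2
    have hb3t : bmem X a3 = true := (bmem_iff X a3).2 ha3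
    have hcount3 : t.edges.countP (eIn X) = 3 := by
      rw [htedges]
      simp [List.countP_cons, hb1t, hb2t, hb3t]
    intro heq
    have h1 : edgeIndicator t.edges ∈ cycleSpace G3 :=
      Submodule.subset_span ⟨a1, t, htc, rfl⟩
    rw [← heq] at h1
    have h0 := LinearMap.mem_ker.1 (hker h1)
    rw [phiX_indicator X _ htc.edges_nodup, hcount3] at h0
    exact absurd h0 (by decide)
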